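/- Let G be a finite graph with a vertex cover S of size k, let 𝒞 be a finite set of colors with |𝒞| ≥ k + 1, let W ⊆ V(G), and let f : W → 𝒞 be a precoloring. Then f extends to a proper coloring of G with colors from 𝒞 if and only if both of the following hold: (i) f is a proper coloring of the induced subgraph G[W] (no edge of G with both endpoints in W has its endpoints assigned the same color by f); and (ii) the List Coloring instance on the induced subgraph G[S ∖ W] with lists L(v) = 𝒞 ∖ {f(w) : w ∈ W, vw ∈ E(G)} is a yes-instance. -/
import Mathlib


/-- Precoloring Extension with a vertex cover `S` of size `k` and at least
`k + 1` colors. A precoloring `f` of `W ⊆ V(G)` with colors from `𝒞` extends to a proper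
coloring of `G` with colors from `𝒞` iff (i) `f` is proper on `G[W]`, and (ii) the List
Coloring instance on `G[S ∖ W]` with lists `L(v) = 𝒞 ∖ {f w : w ∈ W, vw ∈ E(G)}` is a
yes-instance. -/
theorem stmt14 {V Col : Type} [Fintype V] (G : SimpleGraph V)
    (S : Finset V) (k : ℕ) (hSk : S.card = k)
    (hvc : ∀ u v : V, G.Adj u v → u ∈ S ∨ v ∈ S)
    (𝒞 : Finset Col) (h𝒞 : k + 1 ≤ 𝒞.card)
    (W : Set V) (f : V → Col) (hf𝒞 : ∀ w ∈ W, f w ∈ 𝒞) :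
    (∃ f' : V → Col, (∀ v, f' v ∈ 𝒞) ∧ (∀ w ∈ W, f' w = f w) ∧
        ∀ u v : V, G.Adj u v → f' u ≠ f' v) ↔
      ((∀ u ∈ W, ∀ v ∈ W, G.Adj u v → f u ≠ f v) ∧
       (∃ g : {v : V // v ∈ S ∧ v ∉ W} → Col,
          (∀ x : {v : V // v ∈ S ∧ v ∉ W},
            g x ∈ (↑𝒞 : Set Col) \ {c : Col | ∃ w ∈ W, G.Adj ↑x w ∧ f w = c}) ∧
          ∀ x y : {v : V // v ∈ S ∧ v ∉ W}, G.Adj ↑x ↑y → g x ≠ g y)) := by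
  classical
  constructor
  · rintro ⟨f', hf'𝒞, hf'W, hf'adj⟩
    refine ⟨fun u hu v hv huv => ?_,
      ⟨fun x => f' x, fun x => ⟨hf'𝒞 x, ?_⟩, fun x y hxy => hf'adj _ _ hxy⟩⟩
    · rw [← hf'W u hu, ← hf'W v hv]; exact hf'adj u v huv
    · rintro ⟨w, hw, hadj, hfw⟩
      exact hf'adj _ _ hadj (by rw [hf'W w hw, hfw])
  · rintro ⟨hW, g, hg1, hg2⟩
    let base : V → Col := fun v =>
      if hv : v ∈ W then f v else if hs : v ∈ S then g ⟨v, hs, hv⟩ else f v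
    have hbaseW : ∀ v ∈ W, base v = f v := fun v hv => dif_pos hv
    have hbaseS : ∀ v (hs : v ∈ S) (hv : v ∉ W), base v = g ⟨v, hs, hv⟩ := by
      intro v hs hv; simp only [base, dif_neg hv, dif_pos hs]
    have hbase𝒞 : ∀ v, v ∈ W ∨ v ∈ S → base v ∈ 𝒞 := by
      intro v hv
      by_cases hw : v ∈ W
      · rw [hbaseW v hw]; exact hf𝒞 v hw
      · rcases hv with h | hs
        · exact absurd h hw
        · rw [hbaseS v hs hw]; exact (hg1 ⟨v, hs, hw⟩).1
    have hpick : ∀ v, v ∉ W → v ∉ S →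
        ∃ c, c ∈ 𝒞 ∧ ∀ u ∈ S, G.Adj v u → c ≠ base u := by
      intro v hvW hvS
      have hcard : ((S.filter (fun u => G.Adj v u)).image base).card < 𝒞.card := by
        calc ((S.filter (fun u => G.Adj v u)).image base).card
            ≤ (S.filter (fun u => G.Adj v u)).card := Finset.card_image_le
          _ ≤ S.card := Finset.card_filter_le _ _
          _ < 𝒞.card := by omega
      have hns : ¬ 𝒞 ⊆ (S.filter (fun u => G.Adj v u)).image base :=
        fun h => absurd (Finset.card_le_card h) (by omega)
      obtain ⟨c, hc𝒞, hcF⟩ := Finset.not_subset.mp hns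
      refine ⟨c, hc𝒞, fun u hu hadj hne => hcF ?_⟩
      exact Finset.mem_image.mpr ⟨u, Finset.mem_filter.mpr ⟨hu, hadj⟩, hne.symm⟩
    choose pick hpick𝒞 hpickne using hpick
    let f' : V → Col := fun v =>
      if hv : v ∈ W then base v else if hs : v ∈ S then base v else pick v hv hs
    have hf'WS : ∀ v, v ∈ W ∨ v ∈ S → f' v = base v := by
      intro v hv
      by_cases hw : v ∈ W
      · exact dif_pos hw
      · rcases hv with h | hs
        · exact absurd h hw
        · simp only [f', dif_neg hw, dif_pos hs]
    have hf'out : ∀ v (hvW : v ∉ W) (hvS : v ∉ S), f' v = pick v hvW hvS := by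
      intro v hvW hvS; simp only [f', dif_neg hvW, dif_neg hvS]
    -- main adjacency lemma, assuming u ∈ S
    have aux : ∀ u v, G.Adj u v → u ∈ S → f' u ≠ f' v := by
      intro u v hadj huS
      have huWS := hf'WS u (Or.inr huS)
      by_cases hvW : v ∈ W
      · rw [hf'WS v (Or.inl hvW), hbaseW v hvW]
        by_cases huW : u ∈ W
        · rw [huWS, hbaseW u huW]; exact hW u huW v hvW hadj
        · rw [huWS, hbaseS u huS huW]
          intro h
          exact (hg1 ⟨u, huS, huW⟩).2 ⟨v, hvW, hadj, h.symm⟩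
      · by_cases hvS : v ∈ S
        · rw [hf'WS v (Or.inr hvS), hbaseS v hvS hvW]
          by_cases huW : u ∈ W
          · rw [huWS, hbaseW u huW]
            intro h
            exact (hg1 ⟨v, hvS, hvW⟩).2 ⟨u, huW, hadj.symm, h⟩
          · rw [huWS, hbaseS u huS huW]
            exact hg2 ⟨u, huS, huW⟩ ⟨v, hvS, hvW⟩ hadj
        · rw [hf'out v hvW hvS, huWS]
          exact fun h => hpickne v hvW hvS u huS hadj.symm h.symm
    refine ⟨f', ?_, ?_, ?_⟩
    · intro v
      by_cases hvW : v ∈ W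
      · rw [hf'WS v (Or.inl hvW)]; exact hbase𝒞 v (Or.inl hvW)
      · by_cases hvS : v ∈ S
        · rw [hf'WS v (Or.inr hvS)]; exact hbase𝒞 v (Or.inr hvS)
        · rw [hf'out v hvW hvS]; exact hpick𝒞 v hvW hvS
    · intro w hw; rw [hf'WS w (Or.inl hw), hbaseW w hw]
    · intro u v hadj
      rcases hvc u v hadj with huS | hvS
      · exact aux u v hadj huS
      · exact fun h => aux v u hadj.symm hvS h.symm
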